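/- Let b be an odd prime and h, t integers coprime to b. Then ω_{h,b}/ω_{th,b}^t = (h/b)·(th/b)^t · e^{πi(1-t)(b-1)/4} · e^{(2πi/b)·(1/24)(1-t²)(1-b²)h}, where ω_{h,k} = exp(πi·s(h,k)) with s(h,k) the Dedekind sum, and (·/b) the Legendre symbol. -/

import Mathlib

open Complex Real

open scoped Classical in
/-- The sawtooth function `((x))`. -/
noncomputable def saw (x : ℝ) : ℝ :=
  if (⌊x⌋ : ℝ) = x then 0 else x - ⌊x⌋ - 1 / 2

/-- The Dedekind sum `s(h,k) = ∑_{μ mod k} ((μ/k))((hμ/k))`. -/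
noncomputable def dedekindSum (h : ℤ) (k : ℕ) : ℝ :=
  ∑ μ ∈ Finset.range k, saw ((μ : ℝ) / k) * saw ((h : ℝ) * μ / k)

/-- `ω_{h,k} = exp(πi·s(h,k))`. -/
noncomputable def dedekindOmega (h : ℤ) (k : ℕ) : ℂ :=
  Complex.exp (π * I * dedekindSum h k)

namespace DedekindAux


/-- `S(h) = ∑_{μ<b} μ·(hμ mod b)` as an integer. -/
def Sz (b : ℕ) (h : ℤ) : ℤ := ∑ μ ∈ Finset.range b, (μ : ℤ) * ((h * μ) % (b : ℤ))

/-- `Q = ∑_{μ<b} μ²`. -/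
def Qz (b : ℕ) : ℤ := ∑ μ ∈ Finset.range b, (μ : ℤ) ^ 2

lemma six_Qz (b : ℕ) : 6 * Qz b = b * ((b : ℤ) - 1) * (2 * b - 1) := by
  induction b with
  | zero => simp [Qz]
  | succ n ih =>
    rw [Qz, Finset.sum_range_succ, ← Qz]
    push_cast
    push_cast at ih
    ring_nf
    ring_nf at ih
    linarith [ih]

lemma two_sum_id (b : ℕ) : 2 * (∑ μ ∈ Finset.range b, (μ : ℤ)) = b * ((b : ℤ) - 1) := by
  induction b with
  | zero => simp
  | succ n ih =>
    rw [Finset.sum_range_succ]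
    push_cast
    push_cast at ih
    linarith [ih]

variable (b : ℕ) [hbp : Fact b.Prime]

lemma sum_zmod {M : Type*} [AddCommMonoid M] (G : ZMod b → M) :
    ∑ μ ∈ Finset.range b, G (μ : ℕ) = ∑ x : ZMod b, G x := by
  haveI : NeZero b := ⟨hbp.out.ne_zero⟩
  refine Finset.sum_bij' (fun μ _ => ((μ : ℕ) : ZMod b)) (fun x _ => x.val) ?_ ?_ ?_ ?_ ?_
  · intro a _; exact Finset.mem_univ _
  · intro x _; exact Finset.mem_range.2 x.val_lt
  · intro a ha; exact ZMod.val_natCast_of_lt (Finset.mem_range.1 ha)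
  · intro x _; simp [ZMod.natCast_val, ZMod.cast_id]
  · intro a _; rfl

lemma sum_perm {M : Type*} [AddCommMonoid M] {h : ℤ} (hh : (h : ZMod b) ≠ 0)
    (g : ℤ → M) :
    ∑ μ ∈ Finset.range b, g ((h * μ) % (b : ℤ)) = ∑ μ ∈ Finset.range b, g μ := by
  haveI : NeZero b := ⟨hbp.out.ne_zero⟩
  have key : ∀ μ : ℕ, (h * μ) % (b : ℤ) = (((h : ZMod b) * (μ : ℕ)).val : ℤ) := by
    intro μ
    have : ((h * μ : ℤ) : ZMod b) = (h : ZMod b) * (μ : ℕ) := by push_cast; ring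
    rw [← this, ZMod.val_intCast]
  have key2 : ∀ μ : ℕ, ((μ : ℤ) : ZMod b) = ((μ : ℕ) : ZMod b) := by intro μ; push_cast; rfl
  calc ∑ μ ∈ Finset.range b, g ((h * μ) % (b : ℤ))
      = ∑ μ ∈ Finset.range b, (fun x : ZMod b => g (x.val : ℤ)) ((h : ZMod b) * (μ : ℕ)) := by
        refine Finset.sum_congr rfl fun μ _ => by rw [key μ]
    _ = ∑ x : ZMod b, (fun x : ZMod b => g (x.val : ℤ)) ((h : ZMod b) * x) :=
        sum_zmod b (fun x : ZMod b => g (((h : ZMod b) * x).val : ℤ))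
    _ = ∑ x : ZMod b, (fun x : ZMod b => g (x.val : ℤ)) x :=
        (Fintype.sum_bijective _ (mulLeft_bijective₀ _ hh) _ _ fun x => rfl)
    _ = ∑ μ ∈ Finset.range b, g μ := by
        rw [← sum_zmod b]
        refine Finset.sum_congr rfl fun μ hμ => ?_
        rw [ZMod.val_natCast_of_lt (Finset.mem_range.1 hμ)]


lemma not_dvd_mul (b : ℕ) [hbp : Fact b.Prime] {h : ℤ} (hh : (h : ZMod b) ≠ 0) {μ : ℕ}
    (h1 : 1 ≤ μ) (h2 : μ < b) : ¬ ((b : ℤ) ∣ h * μ) := by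
  rw [← ZMod.intCast_zmod_eq_zero_iff_dvd]
  push_cast
  refine fun H => ?_
  rcases mul_eq_zero.1 H with H | H
  · exact hh H
  · rw [ZMod.natCast_eq_zero_iff] at H
    exact absurd (Nat.le_of_dvd (by omega) H) (by omega)

lemma closed_form (b : ℕ) [hbp : Fact b.Prime] (hb : b ≠ 2) {h : ℤ} (hh : (h : ZMod b) ≠ 0) :
    dedekindSum h b = (Sz b h : ℝ) / (b : ℝ) ^ 2 - (b / 2 : ℕ) + ((b : ℝ) - 1) / 4 := by
  have hb1 : 1 < b := hbp.out.one_lt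
  have hb0 : (0 : ℝ) < (b : ℝ) := by positivity
  have hbne : (b : ℝ) ≠ 0 := hb0.ne'
  set F : ℕ → ℝ := fun μ => ((μ : ℝ) / b - 1/2) * ((((h * μ) % (b:ℤ) : ℤ) : ℝ) / b - 1/2)
    with hF
  have hterm : ∀ μ : ℕ, 1 ≤ μ → μ < b → saw ((μ : ℝ) / b) * saw ((h : ℝ) * μ / b) = F μ := by
    intro μ h1 h2
    have harg : (h : ℝ) * μ / b = (((h * μ : ℤ) : ℝ)) / ((b:ℕ) : ℝ) := by push_cast; ring
    have hfr : Int.fract ((h : ℝ) * μ / b) = (((h * μ) % (b:ℤ) : ℤ) : ℝ) / b := by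
      rw [harg, Int.fract_div_intCast_eq_div_intCast_mod]
    have hfr' : (h : ℝ) * μ / b - ⌊(h : ℝ) * μ / b⌋ = Int.fract ((h:ℝ) * μ / b) := rfl
    have hr0 : 0 < (((h * μ) % (b:ℤ) : ℤ) : ℝ) := by
      have h1' : 0 ≤ (h * μ) % (b:ℤ) := Int.emod_nonneg _ (by exact_mod_cast (by omega : b ≠ 0))
      have h2' : (h * μ) % (b:ℤ) ≠ 0 := fun H => not_dvd_mul b hh h1 h2 (Int.dvd_of_emod_eq_zero H)
      exact_mod_cast lt_of_le_of_ne h1' (Ne.symm h2')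
    have s1 : saw ((μ : ℝ) / b) = (μ : ℝ) / b - 1/2 := by
      rw [saw]
      have hlt : (μ : ℝ) / b < 1 := (div_lt_one hb0).2 (by exact_mod_cast h2)
      have hge : (0:ℝ) < (μ : ℝ) / b := by
        have : (0:ℝ) < (μ:ℝ) := by exact_mod_cast h1
        positivity
      have hfl : ⌊(μ : ℝ) / b⌋ = 0 := Int.floor_eq_zero_iff.2 ⟨le_of_lt hge, hlt⟩
      rw [hfl, if_neg (by rw [Int.cast_zero]; exact fun H => lt_irrefl _ (H ▸ hge))]
      norm_num
    have s2 : saw ((h : ℝ) * μ / b) = (((h * μ) % (b:ℤ) : ℤ) : ℝ) / b - 1/2 := by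
      have hnotint : ¬ ((⌊(h:ℝ) * μ / b⌋ : ℝ) = (h:ℝ) * μ / b) := by
        intro H
        have hz : Int.fract ((h:ℝ) * μ / b) = 0 := by rw [← hfr', H, sub_self]
        rw [hfr] at hz
        exact absurd ((div_eq_zero_iff.1 hz).resolve_right hbne) hr0.ne'
      rw [saw, if_neg hnotint, hfr', hfr]
    rw [s1, s2, hF]
  have step1 : dedekindSum h b = (∑ μ ∈ Finset.range b, F μ) - 1/4 := by
    have hdiff : ∑ μ ∈ Finset.range b,
        (F μ - saw ((μ : ℝ) / b) * saw ((h : ℝ) * μ / b)) = 1/4 := by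
      rw [Finset.sum_eq_single 0]
      · have hsaw0 : saw (((0:ℕ) : ℝ) / b) * saw ((h:ℝ) * ((0:ℕ):ℝ) / b) = 0 := by
          norm_num [saw]
        have hF0 : F 0 = 1/4 := by norm_num [hF]
        rw [hF0, hsaw0]
        norm_num
      · intro μ hμ hne
        rw [hterm μ (by omega) (Finset.mem_range.1 hμ), sub_self]
      · intro H
        exact absurd (Finset.mem_range.2 (by omega)) H
    rw [Finset.sum_sub_distrib] at hdiff
    rw [dedekindSum]
    linarith [hdiff]
  have hperm : ∑ μ ∈ Finset.range b, (((h * μ) % (b:ℤ) : ℤ) : ℝ)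
      = ∑ μ ∈ Finset.range b, ((μ:ℤ) : ℝ) :=
    sum_perm b hh (fun z : ℤ => (z : ℝ))
  have hcast : ∑ μ ∈ Finset.range b, ((μ:ℤ) : ℝ) = ∑ μ ∈ Finset.range b, (μ : ℝ) := by
    push_cast; rfl
  rw [hcast] at hperm
  have hSRn : (∑ μ ∈ Finset.range b, μ) = b * (b/2) := by
    have hn := Finset.sum_range_id_mul_two b
    have hodd : b % 2 = 1 := Nat.odd_iff.1 (hbp.out.odd_of_ne_two hb)
    have hb2 : b - 1 = 2*(b/2) := by omega
    rw [hb2] at hn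
    have : b * (2 * (b/2)) = (b * (b/2)) * 2 := by ring
    rw [this] at hn
    exact Nat.eq_of_mul_eq_mul_right (by norm_num) hn
  have hSR : (∑ μ ∈ Finset.range b, (μ:ℝ)) = (b:ℝ) * ((b/2 : ℕ) : ℝ) := by
    have := congrArg (fun n : ℕ => (n : ℝ)) hSRn
    simp only [Nat.cast_sum, Nat.cast_mul] at this
    exact this
  have hSz : ((Sz b h : ℤ) : ℝ)
      = ∑ μ ∈ Finset.range b, (μ:ℝ) * (((h * μ) % (b:ℤ) : ℤ) : ℝ) := by
    rw [Sz, Int.cast_sum]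
    exact Finset.sum_congr rfl fun μ _ => by push_cast; ring
  have expand : ∀ μ ∈ Finset.range b, F μ
      = (μ:ℝ) * (((h * μ) % (b:ℤ) : ℤ) : ℝ) / (b:ℝ)^2
        - (μ:ℝ) / (2*b) - (((h * μ) % (b:ℤ) : ℤ) : ℝ) / (2*b) + 1/4 := by
    intro μ _
    rw [hF]
    simp only
    field_simp
    ring
  rw [step1, Finset.sum_congr rfl expand]
  rw [Finset.sum_add_distrib, Finset.sum_sub_distrib, Finset.sum_sub_distrib,
    ← Finset.sum_div, ← Finset.sum_div, ← Finset.sum_div, Finset.sum_const,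
    Finset.card_range, hperm, hSR, ← hSz]
  rw [nsmul_eq_mul]
  field_simp
  ring


lemma modb2 (b : ℕ) [hbp : Fact b.Prime] {h : ℤ} (hh : (h : ZMod b) ≠ 0) :
    ((b:ℤ))^2 ∣ 2 * h * Sz b h - (h^2 + 1) * Qz b := by
  have hdvd : ((b:ℤ))^2 ∣ ∑ μ ∈ Finset.range b, (h * μ - (h * μ) % (b:ℤ))^2 := by
    refine Finset.dvd_sum fun μ _ => ?_
    have : h * μ - (h * μ) % (b:ℤ) = (b:ℤ) * ((h * μ) / (b:ℤ)) := by
      rw [Int.emod_def]; ring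
    rw [this, mul_pow]
    exact Dvd.intro _ rfl
  have hexp : ∑ μ ∈ Finset.range b, (h * μ - (h * μ) % (b:ℤ))^2
      = h^2 * Qz b + Qz b - 2 * h * Sz b h := by
    have hsq : ∑ μ ∈ Finset.range b, ((h * μ) % (b:ℤ))^2 = Qz b := by
      have := sum_perm b hh (fun z : ℤ => z^2)
      rw [this, Qz]
    calc ∑ μ ∈ Finset.range b, (h * μ - (h * μ) % (b:ℤ))^2
        = ∑ μ ∈ Finset.range b,
            (h^2 * (μ:ℤ)^2 + ((h * μ) % (b:ℤ))^2 - 2 * h * ((μ:ℤ) * ((h * μ) % (b:ℤ)))) := by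
          exact Finset.sum_congr rfl fun μ _ => by ring
      _ = h^2 * Qz b + Qz b - 2 * h * Sz b h := by
          rw [Finset.sum_sub_distrib, Finset.sum_add_distrib, ← Finset.mul_sum, ← Finset.mul_sum,
            hsq, Qz, Sz]
  have : 2 * h * Sz b h - (h^2 + 1) * Qz b
      = -(∑ μ ∈ Finset.range b, (h * μ - (h * μ) % (b:ℤ))^2) := by
    rw [hexp]; ring
  rw [this]
  exact hdvd.neg_right

lemma parity_core (b : ℕ) [hbp : Fact b.Prime] (hb : b ≠ 2) {a : ℕ} (ha1 : a % 2 = 1)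
    (ha0 : ((a : ℕ) : ZMod b) ≠ 0) :
    (2:ℤ) ∣ Sz b (a : ℤ) - (b : ℤ) * (b/2 : ℕ)
      - ((∑ x ∈ Finset.Ico 1 (b / 2).succ, x * a / b : ℕ) : ℤ) := by
  have hb1 : 1 < b := hbp.out.one_lt
  have hodd : b % 2 = 1 := Nat.odd_iff.1 (hbp.out.odd_of_ne_two hb)
  set m := b / 2 with hm
  have hbm : b = 2 * m + 1 := by omega
  have ha2 : (((a:ℕ) : ℤ) : ZMod 2) = 1 := by
    have : ((a % 2 : ℕ) : ZMod 2) = ((a : ℕ) : ZMod 2) := ZMod.natCast_mod a 2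
    push_cast
    rw [← this, ha1, Nat.cast_one]
  have hb2 : (((b:ℕ) : ℤ) : ZMod 2) = 1 := by
    have : ((b % 2 : ℕ) : ZMod 2) = ((b : ℕ) : ZMod 2) := ZMod.natCast_mod b 2
    push_cast
    rw [← this, hodd, Nat.cast_one]
  have hsq : ∀ x : ZMod 2, x * x = x := by decide
  -- the quotient as a ZMod 2 value
  set q : ℕ → ZMod 2 := fun μ => ((((a:ℤ) * μ) / (b:ℤ) : ℤ) : ZMod 2) with hq
  -- per-term residue parity
  have hres : ∀ μ : ℕ, ((((a:ℤ) * μ) % (b:ℤ) : ℤ) : ZMod 2) = (μ : ZMod 2) + q μ := by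
    intro μ
    have := Int.emod_def ((a:ℤ) * μ) (b:ℤ)
    calc ((((a:ℤ) * μ) % (b:ℤ) : ℤ) : ZMod 2)
        = (((a:ℤ) * μ - (b:ℤ) * (((a:ℤ) * μ) / (b:ℤ)) : ℤ) : ZMod 2) := by rw [← this]
      _ = ((a:ℤ) : ZMod 2) * (μ : ZMod 2) - ((b:ℤ):ZMod 2) * q μ := by push_cast; ring
      _ = (μ : ZMod 2) - q μ := by rw [ha2, hb2]; ring
      _ = (μ : ZMod 2) + q μ := by rw [sub_eq_add_neg, ZMod.neg_eq_self_mod_two]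
  -- main sum in ZMod 2
  have hSz2 : ((Sz b (a:ℤ) : ℤ) : ZMod 2)
      = (∑ μ ∈ Finset.range b, (μ : ZMod 2)) + ∑ μ ∈ Finset.range b, (μ : ZMod 2) * q μ := by
    rw [Sz, Int.cast_sum, ← Finset.sum_add_distrib]
    refine Finset.sum_congr rfl fun μ _ => ?_
    rw [Int.cast_mul, hres μ]
    have hμ : (((μ:ℕ) : ℤ) : ZMod 2) = ((μ:ℕ) : ZMod 2) := by push_cast; rfl
    rw [hμ, mul_add, hsq (μ : ZMod 2)]
  -- ∑ μ = b * m
  have hSRn : (∑ μ ∈ Finset.range b, μ) = b * m := by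
    have hn := Finset.sum_range_id_mul_two b
    have hb2' : b - 1 = 2 * m := by omega
    rw [hb2'] at hn
    have : b * (2 * m) = (b * m) * 2 := by ring
    rw [this] at hn
    exact Nat.eq_of_mul_eq_mul_right (by norm_num) hn
  have hsum1 : (∑ μ ∈ Finset.range b, (μ : ZMod 2)) = ((b * m : ℕ) : ZMod 2) := by
    rw [← Nat.cast_sum, hSRn]
  -- pairing: ∑ μ * q μ = ∑_{Ico 1 (m+1)} q
  have hdiv : ∀ u : ℕ, 1 ≤ u → u ≤ m →
      ((a:ℤ) * ((b - u : ℕ) : ℤ)) / (b:ℤ) = (a:ℤ) - ((a:ℤ) * u) / (b:ℤ) - 1 := by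
    intro u h1 h2
    have hub : u ≤ b := by omega
    have hbpos : (0:ℤ) < (b:ℤ) := by exact_mod_cast (by omega : 0 < b)
    set Q := ((a:ℤ) * u) / (b:ℤ) with hQ
    set R := ((a:ℤ) * u) % (b:ℤ) with hR
    have hQR : (b:ℤ) * Q + R = (a:ℤ) * u := Int.mul_ediv_add_emod _ _
    have hR0 : 0 ≤ R := Int.emod_nonneg _ hbpos.ne'
    have hRb : R < b := Int.emod_lt_of_pos _ hbpos
    have hRne : R ≠ 0 := by
      intro H
      have ha0' : (((a:ℕ):ℤ) : ZMod b) ≠ 0 := by push_cast; exact ha0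
      exact not_dvd_mul b ha0' h1 (by omega) (Int.dvd_of_emod_eq_zero (hR ▸ H))
    have hcast : ((b - u : ℕ) : ℤ) = (b:ℤ) - u := by
      push_cast [Nat.cast_sub hub]; ring
    have key : (a:ℤ) * ((b - u : ℕ) : ℤ) = (b:ℤ) * ((a:ℤ) - Q - 1) + ((b:ℤ) - R) := by
      rw [hcast]; linear_combination hQR
    have hRpos : 0 < R := lt_of_le_of_ne hR0 (Ne.symm hRne)
    exact ((Int.ediv_emod_unique (r := (b:ℤ) - R) hbpos).2
      ⟨by linear_combination -key, by linarith, by linarith⟩).1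
  have hpair : ∑ μ ∈ Finset.range b, (μ : ZMod 2) * q μ
      = ∑ u ∈ Finset.Ico 1 (m+1), q u := by
    have hsplit : ∑ μ ∈ Finset.range b, (μ : ZMod 2) * q μ
        = (∑ μ ∈ Finset.Ico 0 (m+1), (μ : ZMod 2) * q μ)
          + ∑ μ ∈ Finset.Ico (m+1) b, (μ : ZMod 2) * q μ := by
      rw [Finset.sum_Ico_consecutive _ (by omega) (by omega), Finset.range_eq_Ico]
    have hbot : ∑ μ ∈ Finset.Ico 0 (m+1), (μ : ZMod 2) * q μ
        = ∑ μ ∈ Finset.Ico 1 (m+1), (μ : ZMod 2) * q μ := by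
      rw [Finset.sum_eq_sum_Ico_succ_bot (by omega : 0 < m+1)]
      norm_num
    have hrefl : ∑ μ ∈ Finset.Ico (m+1) b, (μ : ZMod 2) * q μ
        = ∑ u ∈ Finset.Ico 1 (m+1), ((b - u : ℕ) : ZMod 2) * q (b - u) := by
      refine Finset.sum_nbij' (fun μ => b - μ) (fun u => b - u) ?_ ?_ ?_ ?_ ?_
      · intro μ hμ; simp only [Finset.mem_Ico] at hμ ⊢; omega
      · intro u hu; simp only [Finset.mem_Ico] at hu ⊢; omega
      · intro μ hμ; simp only [Finset.mem_Ico] at hμ; beta_reduce; omega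
      · intro u hu; simp only [Finset.mem_Ico] at hu; beta_reduce; omega
      · intro μ hμ; simp only [Finset.mem_Ico] at hμ
        beta_reduce
        rw [Nat.sub_sub_self (by omega : μ ≤ b)]
    rw [hsplit, hbot, hrefl, ← Finset.sum_add_distrib]
    refine Finset.sum_congr rfl fun u hu => ?_
    rw [Finset.mem_Ico] at hu
    have h1 : 1 ≤ u := hu.1
    have h2 : u ≤ m := by omega
    have hcast2 : ((b - u : ℕ) : ZMod 2) = ((b:ℕ) : ZMod 2) - (u : ZMod 2) := by
      have : ((b - u : ℕ) : ℤ) = (b:ℤ) - u := by push_cast [Nat.cast_sub (by omega : u ≤ b)]; ring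
      have := congrArg (fun z : ℤ => (z : ZMod 2)) this
      push_cast at this
      exact this
    have hbb : ((b:ℕ) : ZMod 2) = 1 := by
      have := hb2; push_cast at this; exact this
    have ha2' : ((a:ℕ) : ZMod 2) = 1 := by push_cast at ha2; exact ha2
    have hqq : q (b - u) = q u := by
      show ((((a:ℤ) * ((b - u : ℕ):ℤ)) / (b:ℤ) : ℤ) : ZMod 2) = q u
      rw [hdiv u h1 h2]
      push_cast
      rw [ha2']
      have hid : ∀ X : ZMod 2, 1 - X - 1 = X := by decide
      exact hid _
    rw [hcast2, hbb, hqq]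
    ring
  -- eisenstein sum cast
  have hE : ((∑ x ∈ Finset.Ico 1 m.succ, x * a / b : ℕ) : ZMod 2)
      = ∑ u ∈ Finset.Ico 1 (m+1), q u := by
    rw [Nat.cast_sum]
    refine Finset.sum_congr (by rw [Nat.succ_eq_add_one]) fun u _ => ?_
    have h1 : ((u * a / b : ℕ) : ℤ) = ((a:ℤ) * u) / (b:ℤ) := by
      rw [Int.natCast_ediv]
      push_cast
      rw [mul_comm]
    have h2 := congrArg (fun z : ℤ => (z : ZMod 2)) h1
    push_cast at h2
    rw [hq]
    simp only
    push_cast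
    exact h2
  -- conclude
  have hfin : (((Sz b (a:ℤ) - (b:ℤ) * (m:ℕ)
      - ((∑ x ∈ Finset.Ico 1 m.succ, x * a / b : ℕ) : ℤ)) : ℤ) : ZMod 2) = 0 := by
    rw [Int.cast_sub, Int.cast_sub, hSz2, hsum1, Int.cast_natCast, hE]
    rw [hpair]
    push_cast
    ring
  have := (ZMod.intCast_zmod_eq_zero_iff_dvd _ 2).1 hfin
  exact_mod_cast this


lemma legendre_decomp (b : ℕ) [hbp : Fact b.Prime] (hb : b ≠ 2) {h : ℤ}
    (hh : (h : ZMod b) ≠ 0) :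
    ∃ A : ℤ, (legendreSym b h : ℤ) = 1 - 2 * A ∧ (A = 0 ∨ A = 1) ∧
      (2:ℤ) ∣ Sz b h - (b:ℤ) * (b/2 : ℕ) - A := by
  haveI : NeZero b := ⟨hbp.out.ne_zero⟩
  have hodd : b % 2 = 1 := Nat.odd_iff.1 (hbp.out.odd_of_ne_two hb)
  obtain ⟨a, ha1, hcong⟩ : ∃ a : ℕ, a % 2 = 1 ∧ ((a:ℕ) : ZMod b) = (h : ZMod b) := by
    by_cases hv : (h : ZMod b).val % 2 = 1
    · exact ⟨(h : ZMod b).val, hv, ZMod.natCast_zmod_val _⟩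
    · refine ⟨(h : ZMod b).val + b, by omega, ?_⟩
      push_cast
      rw [ZMod.natCast_zmod_val, ZMod.natCast_self, add_zero]
  have ha0 : ((a:ℕ) : ZMod b) ≠ 0 := by rw [hcong]; exact hh
  have hcast : (h : ZMod b) = (((a:ℕ):ℤ) : ZMod b) := by push_cast; rw [hcong]
  have hL : legendreSym b h = legendreSym b (a : ℤ) := by
    simp only [legendreSym]
    rw [hcast]
  have hSzeq : Sz b h = Sz b (a : ℤ) := by
    have hmod : h ≡ (a:ℤ) [ZMOD (b:ℕ)] := (ZMod.intCast_eq_intCast_iff _ _ _).1 hcast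
    rw [Sz, Sz]
    refine Finset.sum_congr rfl fun μ _ => ?_
    have := hmod.mul_right (μ:ℤ)
    rw [Int.ModEq] at this
    rw [this]
  have hEis := ZMod.eisenstein_lemma hb ha1 ha0
  set E := ∑ x ∈ Finset.Ico 1 (b / 2).succ, x * a / b with hEdef
  have hcore : (2:ℤ) ∣ Sz b (a:ℤ) - (b:ℤ) * (b/2 : ℕ) - (E : ℤ) := parity_core b hb ha1 ha0
  obtain ⟨k, hk⟩ := hcore
  rcases Nat.even_or_odd E with hpar | hpar
  · refine ⟨0, ?_, Or.inl rfl, ?_⟩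
    · rw [hL, hEis, hpar.neg_one_pow]; ring
    · obtain ⟨e, he⟩ := hpar
      refine ⟨k + e, ?_⟩
      rw [hSzeq]
      have hcE : (E:ℤ) = 2 * e := by exact_mod_cast congrArg (Nat.cast : ℕ → ℤ) (by omega : E = 2 * e)
      linarith [hk, hcE]
  · refine ⟨1, ?_, Or.inr rfl, ?_⟩
    · rw [hL, hEis, hpar.neg_one_pow]; ring
    · obtain ⟨e, he⟩ := hpar
      refine ⟨k + e, ?_⟩
      rw [hSzeq]
      have hcE : (E:ℤ) = 2 * e + 1 := by exact_mod_cast congrArg (Nat.cast : ℕ → ℤ) he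
      linarith [hk, hcE]


lemma coprime_ne_zero (b : ℕ) [hbp : Fact b.Prime] {h : ℤ} (hh : IsCoprime h (b:ℤ)) :
    (h : ZMod b) ≠ 0 := by
  intro H
  rw [ZMod.intCast_zmod_eq_zero_iff_dvd] at H
  have := hh.isUnit_of_dvd' H dvd_rfl
  rw [Int.isUnit_iff] at this
  have hb1 : 1 < b := hbp.out.one_lt
  rcases this with h1 | h1 <;> omega


lemma master (b : ℕ) [hbp : Fact b.Prime] (hb : b ≠ 2) (h t : ℤ)
    (hh : IsCoprime h (b:ℤ)) (htb : IsCoprime t (b:ℤ)) :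
    ∃ A A' c N : ℤ,
      (legendreSym b h : ℤ) = 1 - 2*A ∧ (A = 0 ∨ A = 1) ∧
      (legendreSym b (t*h) : ℤ) = 1 - 2*A' ∧ (A' = 0 ∨ A' = 1) ∧
      24 * c = (1 - t^2) * (1 - (b:ℤ)^2) ∧
      Sz b h - t * Sz b (t*h) - (b:ℤ)^2 * (A + t*A')
        - (b:ℤ)^2 * (1-t) * ((b/2 : ℕ) : ℤ) - 2*c*h*(b:ℤ) = 2 * (b:ℤ)^2 * N := by
  have hb1 : 1 < b := hbp.out.one_lt
  have hodd : b % 2 = 1 := Nat.odd_iff.1 (hbp.out.odd_of_ne_two hb)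
  set e : ℤ := ((b/2 : ℕ) : ℤ) with he
  have hbe : (b:ℤ) = 2 * e + 1 := by rw [he]; omega
  have hh0 : (h : ZMod b) ≠ 0 := coprime_ne_zero b hh
  have ht0 : (t : ZMod b) ≠ 0 := coprime_ne_zero b htb
  have hth0 : ((t*h : ℤ) : ZMod b) ≠ 0 := by
    push_cast
    exact mul_ne_zero ht0 hh0
  -- the constant c
  have h8 : (8:ℤ) ∣ 1 - (b:ℤ)^2 := by
    obtain ⟨w, hw⟩ := Int.even_mul_succ_self e
    exact ⟨-w, by rw [hbe]; linear_combination (-4:ℤ) * hw⟩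
  have h3 : (3:ℤ) ∣ (1 - t^2) * (1 - (b:ℤ)^2) := by
    have key : ∀ x : ZMod 3, x ≠ 0 → 1 - x^2 = 0 := by decide
    by_cases h3b : b = 3
    · have ht3 : (t : ZMod 3) ≠ 0 := by
        subst h3b
        exact ht0
      have := key _ ht3
      have h30 : ((1 - t^2 : ℤ) : ZMod 3) = 0 := by push_cast; exact this
      rw [show ((3:ℤ)) = ((3:ℕ):ℤ) by norm_num]
      rw [ZMod.intCast_zmod_eq_zero_iff_dvd] at h30
      exact Dvd.dvd.mul_right (by exact_mod_cast h30) _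
    · have hb3 : ¬ ((3:ℕ) ∣ b) := by
        intro H
        exact h3b ((Nat.prime_dvd_prime_iff_eq (by norm_num) hbp.out).1 H).symm
      have hbz : ((b:ℕ) : ZMod 3) ≠ 0 := by
        rw [Ne, ZMod.natCast_eq_zero_iff]
        exact hb3
      have := key _ hbz
      have h30 : ((1 - (b:ℤ)^2 : ℤ) : ZMod 3) = 0 := by push_cast; exact this
      rw [ZMod.intCast_zmod_eq_zero_iff_dvd] at h30
      exact Dvd.dvd.mul_left (by exact_mod_cast h30) _
  have h24 : (24:ℤ) ∣ (1 - t^2) * (1 - (b:ℤ)^2) := by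
    have hcop : IsCoprime (3:ℤ) 8 := by
      rw [Int.isCoprime_iff_gcd_eq_one]
      norm_num
    exact (by norm_num : (24:ℤ) = 3 * 8) ▸ hcop.mul_dvd h3 (h8.mul_left _)
  obtain ⟨c, hc⟩ := h24
  -- legendre decompositions
  obtain ⟨A, hA, hA01, hApar⟩ := legendre_decomp b hb hh0
  obtain ⟨A', hA', hA01', hApar'⟩ := legendre_decomp b hb hth0
  -- divisibility mod b^2
  have D1 := modb2 b hh0
  have D2 := modb2 b hth0
  have hQ6 := six_Qz b
  have hid : (1 - t^2) * Qz b - 4*c*(b:ℤ) = (b:ℤ)^2 * (1 - t^2) * e := by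
    have h6 : 6 * ((1 - t^2) * Qz b - 4*c*(b:ℤ))
        = 6 * ((b:ℤ)^2 * (1 - t^2) * e) := by
      linear_combination (1 - t^2) * hQ6 + (b:ℤ) * hc + 3*(b:ℤ)^2*(1 - t^2) * hbe
    exact mul_left_cancel₀ (by norm_num : (6:ℤ) ≠ 0) h6
  -- divisibility of Y by b^2
  set Y : ℤ := Sz b h - t * Sz b (t*h) - 2*c*h*(b:ℤ) with hY
  have heq : 2*t*h*Y = t*(2 * h * Sz b h - (h^2 + 1) * Qz b)
      - t*(2 * (t*h) * Sz b (t*h) - ((t*h)^2 + 1) * Qz b)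
      + (b:ℤ)^2 * (t * h^2 * (1 - t^2) * e) := by
    rw [hY]
    linear_combination t * h^2 * hid
  have hYdvd : (b:ℤ)^2 ∣ Y := by
    have hdvd : (b:ℤ)^2 ∣ 2*t*h*Y := by
      rw [heq]
      exact dvd_add (dvd_sub (D1.mul_left t) (D2.mul_left t)) (Dvd.intro _ rfl)
    have hcop2 : IsCoprime ((b:ℤ)) 2 := ⟨1, -e, by linarith [hbe]⟩
    have hcop : IsCoprime ((b:ℤ)) (2*(t*h)) :=
      hcop2.mul_right ((htb.symm).mul_right (hh.symm))
    have h2 : IsCoprime ((b:ℤ)^2) (2*(t*h)) := hcop.pow_left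
    rw [show 2*t*h*Y = (2*(t*h))*Y by ring] at hdvd
    exact h2.dvd_of_dvd_mul_left hdvd
  -- parity of X
  set X : ℤ := Sz b h - t * Sz b (t*h) - (b:ℤ)^2 * (A + t*A')
      - (b:ℤ)^2 * (1-t) * ((b/2 : ℕ) : ℤ) - 2*c*h*(b:ℤ) with hX
  have hXb2 : (b:ℤ)^2 ∣ X := by
    have : X = Y - (b:ℤ)^2 * ((A + t*A') + (1-t) * ((b/2 : ℕ) : ℤ)) := by
      rw [hX, hY]; ring
    rw [this]
    exact dvd_sub hYdvd (Dvd.intro _ rfl)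
  have hX2 : (2:ℤ) ∣ X := by
    obtain ⟨u, hu⟩ := hApar
    obtain ⟨v, hv⟩ := hApar'
    refine ⟨u - t*v - c*h*(b:ℤ) - (b:ℤ)*e^2*(1-t) - 2*e*(e+1)*A - t*(2*e^2+2*e+1)*A', ?_⟩
    rw [hX]
    rw [show ((b:ℤ)) = 2*e+1 from hbe] at hu hv ⊢
    rw [← he] at hu hv ⊢
    linear_combination hu - t * hv
  have hcop2' : IsCoprime (2:ℤ) ((b:ℤ)^2) := by
    have hcop2 : IsCoprime ((b:ℤ)) 2 := ⟨1, -e, by linarith [hbe]⟩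
    exact (hcop2.symm).pow_right
  obtain ⟨N, hN⟩ := hcop2'.mul_dvd hX2 hXb2
  exact ⟨A, A', c, N, hA, hA01, hA', hA01', hc.symm, by rw [← hX]; linarith [hN]⟩


end DedekindAux

open DedekindAux in
/-- `ω_{h,b}/ω_{th,b}^t = (h/b)(th/b)^t e^{πi(1-t)(b-1)/4} e^{(2πi/b)(1/24)(1-t²)(1-b²)h}`
for `b` an odd prime and `h, t` coprime to `b`. -/
theorem dedekind_omega_quotient (b : ℕ) [Fact b.Prime] (hb : b ≠ 2) (h t : ℤ)
    (hh : IsCoprime h (b : ℤ)) (htb : IsCoprime t (b : ℤ)) :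
    dedekindOmega h b / (dedekindOmega (t * h) b) ^ t
      = (legendreSym b h : ℂ) * (legendreSym b (t * h) : ℂ) ^ t
        * Complex.exp (π * I * (1 - t) * (b - 1) / 4)
        * Complex.exp (2 * π * I / b
            * ((1 - (t : ℂ) ^ 2) * (1 - (b : ℂ) ^ 2) / 24) * h) := by
  have hb1 : 1 < b := (Fact.out : b.Prime).one_lt
  have hbC : ((b:ℕ) : ℂ) ≠ 0 := by
    exact_mod_cast Nat.cast_ne_zero.2 (by omega : b ≠ 0)
  have hh0 : (h : ZMod b) ≠ 0 := coprime_ne_zero b hh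
  have hth0 : ((t * h : ℤ) : ZMod b) ≠ 0 :=
    coprime_ne_zero b ((htb.mul_left hh))
  obtain ⟨A, A', c, N, hA, hA01, hA', hA01', hc, hmaster⟩ := master b hb h t hh htb
  -- closed forms, cast to ℂ
  have hs1 := closed_form b hb hh0
  have hs2 := closed_form b hb hth0
  have hs1C : ((dedekindSum h b : ℝ) : ℂ)
      = (Sz b h : ℂ) / (b : ℂ)^2 - ((b/2 : ℕ) : ℂ) + ((b:ℂ) - 1)/4 := by
    have := congrArg (fun x : ℝ => (x : ℂ)) hs1
    push_cast at this
    exact this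
  have hs2C : ((dedekindSum (t*h) b : ℝ) : ℂ)
      = (Sz b (t*h) : ℂ) / (b : ℂ)^2 - ((b/2 : ℕ) : ℂ) + ((b:ℂ) - 1)/4 := by
    have := congrArg (fun x : ℝ => (x : ℂ)) hs2
    push_cast at this
    exact this
  have hmC : (Sz b h : ℂ) - t * (Sz b (t*h) : ℂ) - (b:ℂ)^2 * (A + t*A')
      - (b:ℂ)^2 * (1-t) * ((b/2 : ℕ) : ℂ) - 2*c*h*(b:ℂ) = 2 * (b:ℂ)^2 * N := by
    have h0 := congrArg (fun z : ℤ => (z : ℂ)) hmaster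
    simp only [Int.cast_sub, Int.cast_mul, Int.cast_add, Int.cast_pow, Int.cast_natCast,
      Int.cast_one, Int.cast_ofNat] at h0
    push_cast at h0
    convert h0 using 2 <;> push_cast <;> ring
  have hcC : 24 * (c:ℂ) = (1 - (t:ℂ)^2) * (1 - (b:ℂ)^2) := by
    have := congrArg (fun z : ℤ => (z : ℂ)) hc
    simp only [Int.cast_sub, Int.cast_mul, Int.cast_pow, Int.cast_natCast,
      Int.cast_one, Int.cast_ofNat] at this
    linear_combination this
  -- LHS as a single exponential
  have hL : dedekindOmega h b / (dedekindOmega (t*h) b) ^ t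
      = Complex.exp (π * I * dedekindSum h b - t * (π * I * dedekindSum (t*h) b)) := by
    simp only [dedekindOmega]
    rw [← Complex.exp_int_mul, ← Complex.exp_sub]
  -- Legendre factors as exponentials
  have hLeg1 : ((legendreSym b h : ℤ) : ℂ) = Complex.exp (π * I * (A:ℂ)) := by
    rcases hA01 with rfl | rfl
    · rw [hA]; norm_num
    · rw [hA]
      norm_num [Complex.exp_pi_mul_I]
  have hLeg2 : ((legendreSym b (t*h) : ℤ) : ℂ) ^ t
      = Complex.exp ((t:ℂ) * (π * I * (A':ℂ))) := by
    rcases hA01' with rfl | rfl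
    · rw [hA']; norm_num
    · have hval : ((legendreSym b (t*h) : ℤ) : ℂ) = -1 := by rw [hA']; norm_num
      rw [hval, ← Complex.exp_pi_mul_I, ← Complex.exp_int_mul]
      congr 1
      ring
  have hc24 : (1 - (t:ℂ)^2) * (1 - (b:ℂ)^2) / 24 = (c:ℂ) := by
    linear_combination (1/24 : ℂ) * hcC.symm
  rw [hL, hLeg1, hLeg2, hc24, ← Complex.exp_add, ← Complex.exp_add, ← Complex.exp_add,
    Complex.exp_eq_exp_iff_exists_int]
  refine ⟨N, ?_⟩
  rw [hs1C, hs2C]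
  have key : (Sz b h : ℂ) / (b:ℂ)^2 - t * ((Sz b (t*h) : ℂ) / (b:ℂ)^2)
      = (A + t*A') + (1-t) * ((b/2 : ℕ) : ℂ) + 2*c*h/(b:ℂ) + 2*N := by
    field_simp
    linear_combination hmC
  linear_combination (π * I) * key
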